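/- For d ≥ 1, U > 0, σ > 0 and T ≥ 1, the normalizing constant of the normalized maximum likelihood distribution for the d-dimensional normal location family restricted to the ball B(0,U) satisfies ∫_{ℝ^d} exp(-T·max(‖μ‖₂ - U, 0)²/(2σ²)) dμ = (dπ^{d/2}/Γ(d/2 + 1)) · ( U^d/d + (σ/√T) ∫_0^∞ (rσ/√T + U)^{d-1} e^{-r²/2} dr ). -/

import Mathlib

open MeasureTheory Set

lemma integral_Ioi_shift (g : ℝ → ℝ) (b : ℝ) :
    ∫ x in Ioi b, g x = ∫ x in Ioi (0:ℝ), g (x + b) := by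
  rw [← integral_indicator measurableSet_Ioi, ← integral_indicator measurableSet_Ioi,
    ← integral_add_right_eq_self ((Ioi b).indicator g) b]
  congr 1
  ext x
  by_cases h : 0 < x
  · rw [indicator_of_mem (by simpa using h : x + b ∈ Ioi b),
      indicator_of_mem (by simpa using h : x ∈ Ioi (0:ℝ))]
  · rw [indicator_of_notMem (by simpa using h), indicator_of_notMem (by simpa using h)]

lemma nml_radial_split (d : ℕ) (hd : 1 ≤ d) (U σ : ℝ) (hU : 0 < U) (hσ : 0 < σ)
    (T : ℕ) (hT : 1 ≤ T) :
    (∫ y in Ioi (0:ℝ), y ^ (d - 1) * Real.exp (-(T : ℝ) * (max (y - U) 0) ^ 2 / (2 * σ ^ 2))) =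
      U ^ d / (d : ℝ) + (σ / Real.sqrt T) *
        ∫ r in Ioi (0 : ℝ), (r * σ / Real.sqrt T + U) ^ (d - 1) * Real.exp (-r ^ 2 / 2) := by
  have hT0 : (0:ℝ) < T := by exact_mod_cast hT
  have hsT : 0 < Real.sqrt T := Real.sqrt_pos.mpr hT0
  have hc0 : 0 < σ / Real.sqrt T := div_pos hσ hsT
  have hb0 : (0:ℝ) < (T:ℝ) / (2 * σ ^ 2) := by positivity
  set F : ℝ → ℝ := fun y => y ^ (d - 1) * Real.exp (-(T : ℝ) * (max (y - U) 0) ^ 2 / (2 * σ ^ 2))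
    with hF
  set ψ : ℝ → ℝ := fun y => (y + U) ^ (d - 1) * Real.exp (-(T : ℝ) * y ^ 2 / (2 * σ ^ 2)) with hψ
  -- integrability of ψ on ℝ
  have hψint : Integrable ψ := by
    have heq : ψ = fun y => ∑ k ∈ Finset.range (d - 1 + 1),
        (U ^ (d - 1 - k) * ((d-1).choose k : ℝ)) *
          (y ^ k * Real.exp (-((T:ℝ)/(2*σ^2)) * y ^ 2)) := by
      funext y
      have hexp : Real.exp (-(T : ℝ) * y ^ 2 / (2 * σ ^ 2))
          = Real.exp (-((T:ℝ)/(2*σ^2)) * y ^ 2) := by congr 1; ring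
      rw [hψ]
      simp only [hexp, add_pow, Finset.sum_mul]
      refine Finset.sum_congr rfl fun k _ => by ring
    rw [heq]
    refine integrable_finset_sum _ fun k _ => Integrable.const_mul ?_ _
    have := integrable_rpow_mul_exp_neg_mul_sq hb0 (s := (k:ℝ))
      (by linarith [Nat.cast_nonneg (α := ℝ) k])
    simpa [Real.rpow_natCast] using this
  -- F = ψ ∘ (· - U) on Ioi U
  have hFψ : ∀ y ∈ Ioi U, F y = ψ (y - U) := by
    intro y hy
    rw [hF, hψ]
    simp only []
    rw [sub_add_cancel, max_eq_left (by simp at hy; linarith)]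
  -- integrability pieces
  have hcont : Continuous F := by
    rw [hF]; fun_prop
  have hInt1 : IntegrableOn F (Ioc 0 U) := hcont.integrableOn_Ioc
  have hcomp : Integrable (fun y => ψ (y - U)) := by
    have h := (measurePreserving_add_right (volume : Measure ℝ) (-U)).integrable_comp_emb
      (measurableEmbedding_addRight (-U)) (g := ψ)
    have : Integrable (ψ ∘ fun x => x + -U) := h.mpr hψint
    simpa [Function.comp_def, sub_eq_add_neg] using this
  have hInt2 : IntegrableOn F (Ioi U) :=
    (hcomp.integrableOn).congr_fun (fun y hy => (hFψ y hy).symm) measurableSet_Ioi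
  -- split
  have hsplit : ∫ y in Ioi (0:ℝ), F y = (∫ y in Ioc (0:ℝ) U, F y) + ∫ y in Ioi U, F y := by
    rw [← Ioc_union_Ioi_eq_Ioi hU.le, setIntegral_union (Ioc_disjoint_Ioi le_rfl)
      measurableSet_Ioi hInt1 hInt2]
  have h1 : ∫ y in Ioc (0:ℝ) U, F y = U ^ d / (d : ℝ) := by
    rw [setIntegral_congr_fun measurableSet_Ioc
      (fun y hy => show F y = y ^ (d-1) by
        rw [hF]; simp only []
        rw [max_eq_right (by simp at hy; linarith)]
        norm_num)]
    rw [← intervalIntegral.integral_of_le hU.le, integral_pow, Nat.sub_add_cancel hd,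
      Nat.cast_sub hd, zero_pow (by omega : d ≠ 0)]
    push_cast
    ring
  have h2 : ∫ y in Ioi U, F y = (σ / Real.sqrt T) *
      ∫ r in Ioi (0 : ℝ), (r * σ / Real.sqrt T + U) ^ (d - 1) * Real.exp (-r ^ 2 / 2) := by
    rw [setIntegral_congr_fun measurableSet_Ioi hFψ, integral_Ioi_shift (fun y => ψ (y - U)) U]
    simp only [add_sub_cancel_right]
    set g : ℝ → ℝ := fun r => (r * σ / Real.sqrt T + U) ^ (d - 1) * Real.exp (-r ^ 2 / 2) with hg
    have key := integral_comp_mul_left_Ioi g 0 (inv_pos.mpr hc0)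
    rw [mul_zero, inv_inv, smul_eq_mul] at key
    rw [← key]
    refine setIntegral_congr_fun measurableSet_Ioi fun x hx => ?_
    rw [hψ, hg]
    simp only []
    have e1 : (σ / Real.sqrt T)⁻¹ * x * σ / Real.sqrt T = x := by
      field_simp
    have e2 : -((σ / Real.sqrt T)⁻¹ * x) ^ 2 / 2 = -(T:ℝ) * x ^ 2 / (2 * σ ^ 2) := by
      have hs : Real.sqrt T ^ 2 = (T:ℝ) := Real.sq_sqrt hT0.le
      field_simp
      rw [hs]
      ring
    rw [e1, e2]
  rw [hsplit, h1, h2]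

/-- The NML normalizing constant for the normal location family restricted to the
ball `B(0,U)` in `ℝ^d`:
`∫ exp(-T·max(‖μ‖-U,0)²/(2σ²)) dμ
  = (d·π^{d/2}/Γ(d/2+1)) · (U^d/d + (σ/√T)·∫_0^∞ (rσ/√T + U)^{d-1} e^{-r²/2} dr)`. -/
theorem nml_normal_location_integral
    (d : ℕ) (hd : 1 ≤ d) (U σ : ℝ) (hU : 0 < U) (hσ : 0 < σ) (T : ℕ) (hT : 1 ≤ T) :
    (∫ μ : EuclideanSpace ℝ (Fin d),
        Real.exp (-(T : ℝ) * (max (‖μ‖ - U) 0) ^ 2 / (2 * σ ^ 2))) =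
      ((d : ℝ) * Real.pi ^ ((d : ℝ) / 2) / Real.Gamma ((d : ℝ) / 2 + 1)) *
        (U ^ d / (d : ℝ) +
          (σ / Real.sqrt T) *
            ∫ r in Set.Ioi (0 : ℝ),
              (r * σ / Real.sqrt T + U) ^ (d - 1) * Real.exp (-r ^ 2 / 2)) := by
  haveI : Nonempty (Fin d) := ⟨⟨0, hd⟩⟩
  haveI : Nontrivial (EuclideanSpace ℝ (Fin d)) := inferInstance
  rw [integral_fun_norm_addHaar (volume : Measure (EuclideanSpace ℝ (Fin d)))
    (fun y => Real.exp (-(T : ℝ) * (max (y - U) 0) ^ 2 / (2 * σ ^ 2)))]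
  rw [finrank_euclideanSpace_fin, Measure.real, EuclideanSpace.volume_ball]
  have hΓ : 0 < Real.Gamma ((d:ℝ)/2 + 1) := Real.Gamma_pos_of_pos (by positivity)
  have hπ : Real.sqrt Real.pi ^ d = Real.pi ^ ((d:ℝ)/2) := by
    rw [Real.sqrt_eq_rpow, ← Real.rpow_natCast (Real.pi ^ ((1:ℝ)/2)) d,
      ← Real.rpow_mul Real.pi_pos.le]
    norm_num
    ring_nf
  simp only [Fintype.card_fin, ENNReal.ofReal_one, one_pow, one_mul,
    ENNReal.toReal_ofReal (by positivity : (0:ℝ) ≤ Real.sqrt Real.pi ^ d /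
      Real.Gamma ((d:ℝ)/2+1)), nsmul_eq_mul, smul_eq_mul]
  rw [hπ, nml_radial_split d hd U σ hU hσ T hT]
  ring
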